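/- Let Θ be a random variable with values in (0,∞), let r₁,…,rₙ ∈ (0,1) and b₁,…,bₙ ∈ ℕ⁺, and let (I₁,…,Iₙ) be a random vector with values in {0,1}ⁿ whose joint probability mass function is P(I₁=ε₁,…,Iₙ=εₙ) = E[∏_{i=1}^n (r_i^Θ)^{ε_i} (1−r_i^Θ)^{1−ε_i}] for (ε₁,…,εₙ) ∈ {0,1}ⁿ (i.e., conditionally on Θ the indicators are independent Bernoulli with success probabilities r_i^Θ). Set X_i = b_i · I_i and S = X₁+⋯+Xₙ. Then for every t with |t| ≤ 1, the probability generating function of S satisfies P_S(t) = E[∏_{i=1}^n (1 − r_i^Θ + r_i^Θ t^{b_i})], and the ordinary generating function of the expected allocations of X₁ satisfies ∑_{k=0}^∞ t^k · E[X₁ · 1_{\{S=k\}}] = E[b₁ · r₁^Θ · t^{b₁} · ∏_{i=2}^n (1 − r_i^Θ + r_i^Θ t^{b_i})]. -/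

import Mathlib

open MeasureTheory ProbabilityTheory

lemma alg_sum_prod {n : ℕ} (f g : Fin (n+1) → ℝ) :
    ∑ s : Finset (Fin (n+1)), (∏ i ∈ s, f i) * ∏ i ∈ sᶜ, g i = ∏ i, (f i + g i) := by
  rw [Finset.prod_add, Finset.powerset_univ]
  exact Finset.sum_congr rfl fun s _ => by rw [Finset.compl_eq_univ_sdiff]

lemma alg_sum_prod0 {n : ℕ} (f g : Fin (n+1) → ℝ) :
    ∑ s : Finset (Fin (n+1)), (if (0:Fin (n+1)) ∈ s then (∏ i ∈ s, f i) * ∏ i ∈ sᶜ, g i else 0)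
      = f 0 * ∏ i : Fin n, (f i.succ + g i.succ) := by
  have h := alg_sum_prod f (Function.update g 0 0)
  have h1 : ∀ s : Finset (Fin (n+1)),
      (∏ i ∈ s, f i) * ∏ i ∈ sᶜ, Function.update g 0 0 i
        = (if (0:Fin (n+1)) ∈ s then (∏ i ∈ s, f i) * ∏ i ∈ sᶜ, g i else 0) := by
    intro s
    by_cases h0 : (0:Fin (n+1)) ∈ s
    · rw [if_pos h0]
      congr 1
      refine Finset.prod_congr rfl fun i hi => ?_
      have : i ≠ 0 := by
        intro hi0; rw [hi0] at hi; exact (Finset.mem_compl.mp hi) h0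
      simp [Function.update_of_ne this]
    · rw [if_neg h0]
      have h0c : (0:Fin (n+1)) ∈ sᶜ := Finset.mem_compl.mpr h0
      rw [Finset.prod_eq_zero h0c (by simp), mul_zero]
  rw [Finset.sum_congr rfl (fun s _ => (h1 s).symm), h, Fin.prod_univ_succ]
  simp [Fin.succ_ne_zero]

theorem pgf_and_ogf_allocation_frailty_bernoulli
    {Ω Ω' : Type*} [MeasurableSpace Ω] [MeasurableSpace Ω']
    (μ : Measure Ω) (μ' : Measure Ω')
    [IsProbabilityMeasure μ] [IsProbabilityMeasure μ']
    (Θ : Ω' → ℝ) (hΘ : Measurable Θ) (hΘpos : ∀ ω', 0 < Θ ω')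
    (n : ℕ) (r : Fin (n + 1) → ℝ) (hr : ∀ i, r i ∈ Set.Ioo (0 : ℝ) 1)
    (b : Fin (n + 1) → ℕ) (hb : ∀ i, 0 < b i)
    (I : Fin (n + 1) → Ω → ℕ) (hI : ∀ i, Measurable (I i))
    (hI01 : ∀ i ω, I i ω ≤ 1)
    (hjoint : ∀ ε : Fin (n + 1) → ℕ, (∀ i, ε i ≤ 1) →
      (μ {ω | ∀ i, I i ω = ε i}).toReal
        = ∫ ω', ∏ i, ((r i ^ Θ ω') ^ (ε i) * (1 - r i ^ Θ ω') ^ (1 - ε i)) ∂μ')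
    (S : Ω → ℕ) (hS : ∀ ω, S ω = ∑ i, b i * I i ω)
    (t : ℝ) (ht : |t| ≤ 1) :
    (∫ ω, t ^ (S ω) ∂μ
      = ∫ ω', ∏ i, (1 - r i ^ Θ ω' + r i ^ Θ ω' * t ^ (b i)) ∂μ')
    ∧ (∑' k : ℕ, t ^ k * ∫ ω in {ω | S ω = k}, ((b 0 : ℝ) * (I 0 ω : ℝ)) ∂μ
      = ∫ ω', (b 0 : ℝ) * r 0 ^ Θ ω' * t ^ (b 0) *
          ∏ i : Fin n, (1 - r i.succ ^ Θ ω' + r i.succ ^ Θ ω' * t ^ (b i.succ)) ∂μ') := by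
  classical
  set J : Ω → Finset (Fin (n+1)) := fun ω => Finset.univ.filter (fun i => I i ω = 1) with hJ
  have I_eq : ∀ i ω, I i ω = if i ∈ J ω then 1 else 0 := by
    intro i ω
    by_cases h : i ∈ J ω
    · rw [if_pos h]; exact (Finset.mem_filter.mp h).2
    · rw [if_neg h]
      have := hI01 i ω
      interval_cases h' : I i ω
      · rfl
      · exact absurd (Finset.mem_filter.mpr ⟨Finset.mem_univ i, h'⟩) h
  have Jset : ∀ s : Finset (Fin (n+1)),
      {ω | J ω = s} = {ω | ∀ i, I i ω = (if i ∈ s then 1 else 0)} := by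
    intro s
    ext ω
    simp only [Set.mem_setOf_eq]
    constructor
    · intro h i; rw [I_eq i ω, h]
    · intro h
      ext i
      simp only [hJ, Finset.mem_filter, Finset.mem_univ, true_and]
      rw [h i]
      by_cases hi : i ∈ s <;> simp [hi]
  have hmeasJ : ∀ s : Finset (Fin (n+1)), MeasurableSet {ω | J ω = s} := by
    intro s
    rw [Jset s]
    have : {ω | ∀ i, I i ω = (if i ∈ s then 1 else 0)}
        = ⋂ i, (I i) ⁻¹' {(if i ∈ s then 1 else 0)} := by
      ext ω; simp
    rw [this]
    exact MeasurableSet.iInter fun i => (hI i) (measurableSet_singleton _)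
  -- key: integral of a function of J
  have key : ∀ (c : Finset (Fin (n+1)) → ℝ) (f : Ω → ℝ), (∀ ω, f ω = c (J ω)) →
      ∫ ω, f ω ∂μ = ∑ s : Finset (Fin (n+1)), c s * (μ {ω | J ω = s}).toReal := by
    intro c f hf
    have hf' : f = fun ω => ∑ s : Finset (Fin (n+1)),
        Set.indicator {ω | J ω = s} (fun _ => c s) ω := by
      funext ω
      rw [hf ω]
      symm
      rw [Finset.sum_eq_single (J ω)]
      · rw [Set.indicator_apply, if_pos (by simp)]
      · intro s _ hs
        rw [Set.indicator_apply, if_neg (by simpa using fun h => hs h.symm)]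
      · intro h; exact absurd (Finset.mem_univ _) h
    rw [hf', integral_finset_sum _ (fun s _ => (integrable_const (c s)).indicator (hmeasJ s))]
    exact Finset.sum_congr rfl fun s _ => by
      rw [integral_indicator_const _ (hmeasJ s), smul_eq_mul, mul_comm]; rfl
  have S_eq : ∀ ω, S ω = ∑ i ∈ J ω, b i := by
    intro ω
    rw [hS ω]
    rw [Finset.sum_congr rfl (fun i _ => by rw [I_eq i ω, mul_ite, mul_one, mul_zero])]
    rw [Finset.sum_ite_mem, Finset.univ_inter]
  -- a_i in (0,1)
  have ha01 : ∀ (i : Fin (n+1)) ω', 0 < r i ^ Θ ω' ∧ r i ^ Θ ω' < 1 := by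
    intro i ω'
    obtain ⟨h1, h2⟩ := Set.mem_Ioo.mp (hr i)
    exact ⟨Real.rpow_pos_of_pos h1 _, Real.rpow_lt_one h1.le h2 (hΘpos ω')⟩
  -- measure of J-fiber as an integral
  have μ_eq : ∀ s : Finset (Fin (n+1)), (μ {ω | J ω = s}).toReal
      = ∫ ω', (∏ i ∈ s, r i ^ Θ ω') * ∏ i ∈ sᶜ, (1 - r i ^ Θ ω') ∂μ' := by
    intro s
    rw [Jset s, hjoint _ (fun i => by split_ifs <;> omega)]
    refine integral_congr_ae (Filter.Eventually.of_forall fun ω' => ?_)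
    beta_reduce
    rw [← Finset.prod_mul_prod_compl s (fun i =>
      (r i ^ Θ ω') ^ (if i ∈ s then 1 else 0) * (1 - r i ^ Θ ω') ^ (1 - if i ∈ s then 1 else 0))]
    congr 1
    · exact Finset.prod_congr rfl fun i hi => by simp [hi]
    · exact Finset.prod_congr rfl fun i hi => by
        simp [Finset.mem_compl.mp (by simpa using hi)]
  -- the per-s integrand and its properties
  set F : Fin (n+1) → Ω' → ℝ := fun i ω' => r i ^ Θ ω' * t ^ (b i) with hF
  set G : Fin (n+1) → Ω' → ℝ := fun i ω' => 1 - r i ^ Θ ω' with hG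
  have hmeas_a : ∀ i : Fin (n+1), Measurable (fun ω' => r i ^ Θ ω') := by
    intro i
    have heq : (fun ω' => r i ^ Θ ω') = fun ω' => Real.exp (Real.log (r i) * Θ ω') := by
      funext ω'
      rw [Real.rpow_def_of_pos (Set.mem_Ioo.mp (hr i)).1]
    rw [heq]
    exact Real.measurable_exp.comp (hΘ.const_mul _)
  have hmeasF : ∀ i, Measurable (F i) := fun i => (hmeas_a i).mul measurable_const
  have hmeasG : ∀ i, Measurable (G i) := fun i => measurable_const.sub (hmeas_a i)
  have hboundF : ∀ i ω', |F i ω'| ≤ 1 := by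
    intro i ω'
    rw [abs_mul]
    refine mul_le_one₀ ?_ (abs_nonneg _) ?_
    · rw [abs_of_pos (ha01 i ω').1]; exact (ha01 i ω').2.le
    · rw [abs_pow]; exact pow_le_one₀ (abs_nonneg t) ht
  have hboundG : ∀ i ω', |G i ω'| ≤ 1 := by
    intro i ω'
    rw [abs_le]
    constructor <;> simp only [hG] <;> nlinarith [(ha01 i ω').1, (ha01 i ω').2]
  have hint : ∀ s : Finset (Fin (n+1)),
      Integrable (fun ω' => (∏ i ∈ s, F i ω') * ∏ i ∈ sᶜ, G i ω') μ' := by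
    intro s
    refine Integrable.mono' (integrable_const 1) ?_ (Filter.Eventually.of_forall fun ω' => ?_)
    · exact ((Finset.measurable_prod s fun i _ => hmeasF i).mul
        (Finset.measurable_prod sᶜ fun i _ => hmeasG i)).aestronglyMeasurable
    · rw [Real.norm_eq_abs, abs_mul, Finset.abs_prod, Finset.abs_prod]
      refine mul_le_one₀ ?_ (Finset.prod_nonneg fun i _ => abs_nonneg _) ?_
      · exact Finset.prod_le_one (fun i _ => abs_nonneg _) (fun i _ => hboundF i ω')
      · exact Finset.prod_le_one (fun i _ => abs_nonneg _) (fun i _ => hboundG i ω')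
  -- combine t^(w s) with the measure integral
  have term_eq : ∀ s : Finset (Fin (n+1)),
      t ^ (∑ i ∈ s, b i) * (μ {ω | J ω = s}).toReal
        = ∫ ω', (∏ i ∈ s, F i ω') * ∏ i ∈ sᶜ, G i ω' ∂μ' := by
    intro s
    rw [μ_eq s, ← integral_const_mul]
    refine integral_congr_ae (Filter.Eventually.of_forall fun ω' => ?_)
    beta_reduce
    rw [← Finset.prod_pow_eq_pow_sum, ← mul_assoc,
      ← Finset.prod_mul_distrib]
    congr 1
    exact Finset.prod_congr rfl fun i _ => mul_comm _ _
  constructor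
  · -- Part 1
    rw [key (fun s => t ^ (∑ i ∈ s, b i)) _ (fun ω => by rw [S_eq ω])]
    rw [Finset.sum_congr rfl (fun s _ => term_eq s),
      ← integral_finset_sum _ (fun s _ => hint s)]
    refine integral_congr_ae (Filter.Eventually.of_forall fun ω' => ?_)
    beta_reduce
    rw [alg_sum_prod (fun i => F i ω') (fun i => G i ω')]
    exact Finset.prod_congr rfl fun i _ => by simp only [hF, hG]; ring
  · -- Part 2
    have hSm : Measurable S := by
      have : S = fun ω => ∑ i, b i * I i ω := funext hS
      rw [this]
      exact Finset.measurable_sum _ fun i _ => (hI i).const_mul (b i)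
    set w : Finset (Fin (n+1)) → ℕ := fun s => ∑ i ∈ s, b i with hw
    set M : ℕ := ∑ i, b i with hM
    have hwM : ∀ s, w s ≤ M := fun s =>
      Finset.sum_le_sum_of_subset (Finset.subset_univ s)
    set c₂ : ℕ → Finset (Fin (n+1)) → ℝ :=
      fun k s => if (0:Fin (n+1)) ∈ s ∧ w s = k then (b 0 : ℝ) else 0 with hc₂
    have setint : ∀ k : ℕ, ∫ ω in {ω | S ω = k}, ((b 0 : ℝ) * (I 0 ω : ℝ)) ∂μ
        = ∑ s : Finset (Fin (n+1)), c₂ k s * (μ {ω | J ω = s}).toReal := by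
      intro k
      have hSk : MeasurableSet {ω | S ω = k} := hSm (measurableSet_singleton k)
      rw [← integral_indicator hSk]
      refine key (c₂ k) _ fun ω => ?_
      rw [Set.indicator_apply]
      simp only [Set.mem_setOf_eq, hc₂]
      have hwJ : w (J ω) = S ω := by rw [hw]; exact (S_eq ω).symm
      rw [I_eq 0 ω]
      by_cases h0 : (0:Fin (n+1)) ∈ J ω <;> by_cases hk : S ω = k
      · rw [if_pos h0, if_pos hk, if_pos ⟨h0, hwJ.trans hk⟩, Nat.cast_one, mul_one]
      · rw [if_pos h0, if_neg hk, if_neg fun h => hk (hwJ.symm.trans h.2)]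
      · rw [if_pos hk, if_neg h0, Nat.cast_zero, mul_zero, if_neg fun h => h0 h.1]
      · rw [if_neg hk, if_neg fun h => h0 h.1]
    calc ∑' k : ℕ, t ^ k * ∫ ω in {ω | S ω = k}, ((b 0 : ℝ) * (I 0 ω : ℝ)) ∂μ
        = ∑ k ∈ Finset.range (M+1), t ^ k *
            ∑ s : Finset (Fin (n+1)), c₂ k s * (μ {ω | J ω = s}).toReal := by
          rw [tsum_eq_sum (s := Finset.range (M+1)) ?_]
          · exact Finset.sum_congr rfl fun k _ => by rw [setint k]
          · intro k hk
            rw [setint k]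
            have hkM : M + 1 ≤ k := by simpa using hk
            have : ∀ s : Finset (Fin (n+1)), c₂ k s = 0 := by
              intro s
              rw [hc₂]
              simp only
              rw [if_neg]
              rintro ⟨-, hws⟩
              exact absurd hws (by have := hwM s; omega)
            simp [this]
      _ = ∑ s : Finset (Fin (n+1)), ∑ k ∈ Finset.range (M+1),
            t ^ k * (c₂ k s * (μ {ω | J ω = s}).toReal) := by
          rw [Finset.sum_congr rfl (fun k _ => Finset.mul_sum _ _ _), Finset.sum_comm]
      _ = ∑ s : Finset (Fin (n+1)), (if (0:Fin (n+1)) ∈ s then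
            (b 0 : ℝ) * t ^ (w s) * (μ {ω | J ω = s}).toReal else 0) := by
          refine Finset.sum_congr rfl fun s _ => ?_
          by_cases h0 : (0:Fin (n+1)) ∈ s
          · rw [if_pos h0]
            rw [Finset.sum_eq_single (w s)]
            · simp [hc₂, h0]; ring
            · intro k _ hkne
              rw [hc₂]; simp only
              rw [if_neg (by rintro ⟨-, h⟩; exact hkne h.symm)]
              ring
            · intro habs
              exact absurd (Finset.mem_range.mpr (by have := hwM s; omega)) habs
          · rw [if_neg h0]
            refine Finset.sum_eq_zero fun k _ => ?_
            rw [hc₂]; simp only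
            rw [if_neg (by rintro ⟨h, -⟩; exact h0 h)]
            ring
      _ = ∑ s : Finset (Fin (n+1)), ∫ ω', (if (0:Fin (n+1)) ∈ s then
            (b 0 : ℝ) * ((∏ i ∈ s, F i ω') * ∏ i ∈ sᶜ, G i ω') else 0) ∂μ' := by
          refine Finset.sum_congr rfl fun s _ => ?_
          by_cases h0 : (0:Fin (n+1)) ∈ s
          · simp only [if_pos h0]
            rw [mul_assoc, term_eq s, ← integral_const_mul]
          · simp only [if_neg h0, integral_zero]
      _ = ∫ ω', ∑ s : Finset (Fin (n+1)), (if (0:Fin (n+1)) ∈ s then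
            (b 0 : ℝ) * ((∏ i ∈ s, F i ω') * ∏ i ∈ sᶜ, G i ω') else 0) ∂μ' := by
          rw [← integral_finset_sum]
          intro s _
          by_cases h0 : (0:Fin (n+1)) ∈ s
          · simp only [if_pos h0]; exact (hint s).const_mul _
          · simp only [if_neg h0]; exact integrable_zero _ _ _
      _ = ∫ ω', (b 0 : ℝ) * r 0 ^ Θ ω' * t ^ (b 0) *
            ∏ i : Fin n, (1 - r i.succ ^ Θ ω' + r i.succ ^ Θ ω' * t ^ (b i.succ)) ∂μ' := by
          refine integral_congr_ae (Filter.Eventually.of_forall fun ω' => ?_)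
          beta_reduce
          rw [Finset.sum_congr rfl (fun s _ => show
              (if (0:Fin (n+1)) ∈ s then (b 0 : ℝ) * ((∏ i ∈ s, F i ω') * ∏ i ∈ sᶜ, G i ω') else 0)
                = (b 0 : ℝ) * (if (0:Fin (n+1)) ∈ s then (∏ i ∈ s, F i ω') * ∏ i ∈ sᶜ, G i ω' else 0)
              from by split_ifs <;> simp),
            ← Finset.mul_sum,
            alg_sum_prod0 (fun i => F i ω') (fun i => G i ω')]
          have hprod : ∏ i : Fin n, (F i.succ ω' + G i.succ ω')
              = ∏ i : Fin n, (1 - r i.succ ^ Θ ω' + r i.succ ^ Θ ω' * t ^ (b i.succ)) :=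
            Finset.prod_congr rfl fun i _ => by simp only [hF, hG]; ring
          rw [hprod]
          simp only [hF]
          ring
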